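/- Let q ≥ 17 be an odd prime power and let a₀, b₀ ∈ F_q be nonzero, with a₀b₀ a nonsquare if q ≡ 1 (mod 4) and a₀b₀ a nonzero square if q ≡ 3 (mod 4). Set R₀ = ⟨(a₀,b₀,0)⟩ and K = H ∪ {R₀}. Then every point of C ∖ H is K-covered. -/

import Mathlib

noncomputable section

/-- Three points of PG(2,q) are collinear if they have linearly dependent representatives. -/
def Coll3 {F : Type*} [Field F] (P Q R : Projectivization F (Fin 3 → F)) : Prop :=
  ¬ LinearIndependent F ![P.rep, Q.rep, R.rep]

/-- A point is `S`-covered if it lies on a line through two distinct points of `S`. -/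
def PGCovered {F : Type*} [Field F] (S : Set (Projectivization F (Fin 3 → F)))
    (P : Projectivization F (Fin 3 → F)) : Prop :=
  ∃ Q ∈ S, ∃ R ∈ S, Q ≠ R ∧ Coll3 P Q R

/-- A point not in `S` is `S`-free if it is not `S`-covered. -/
def PGFree {F : Type*} [Field F] (S : Set (Projectivization F (Fin 3 → F)))
    (P : Projectivization F (Fin 3 → F)) : Prop :=
  P ∉ S ∧ ¬ PGCovered S P

lemma vec_ne_zero {F : Type*} [Field F] (v : Fin 3 → F) (i : Fin 3) (h : v i ≠ 0) : v ≠ 0 :=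
  fun hv => h (by simp [hv])

/-- The set `H = {⟨(1,s⁴,s²)⟩ : s ∈ F}` of points of PG(2,q). -/
def HSet (F : Type*) [Field F] : Set (Projectivization F (Fin 3 → F)) :=
  {P | ∃ s : F, P = Projectivization.mk F ![1, s ^ 4, s ^ 2] (vec_ne_zero _ 0 (by simp))}

/-- The conic `C : XY = Z²` in PG(2,q).  (Membership does not depend on the choice of
representative since the equation is homogeneous.) -/
def conicC (F : Type*) [Field F] : Set (Projectivization F (Fin 3 → F)) :=
  {P | P.rep 0 * P.rep 1 = P.rep 2 ^ 2}

/-- An arc: a set of points no three of which are collinear. -/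
def IsPGArc {F : Type*} [Field F] (S : Set (Projectivization F (Fin 3 → F))) : Prop :=
  ∀ P ∈ S, ∀ Q ∈ S, ∀ R ∈ S, P ≠ Q → P ≠ R → Q ≠ R → ¬ Coll3 P Q R

/-- A complete arc: an arc which cannot be extended to a larger arc. -/
def IsCompletePGArc {F : Type*} [Field F] (S : Set (Projectivization F (Fin 3 → F))) : Prop :=
  IsPGArc S ∧ ∀ P ∉ S, ¬ IsPGArc (insert P S)

section MyAux

variable {F : Type*} [Field F]

lemma my_rep_scalar (P : Projectivization F (Fin 3 → F)) (v : Fin 3 → F) (hv : v ≠ 0)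
    (h : P = Projectivization.mk F v hv) : ∃ a : Fˣ, P.rep = a • v := by
  obtain ⟨a, ha⟩ := Projectivization.exists_smul_eq_mk_rep F v hv
  exact ⟨a, by rw [← h] at ha; rw [← ha]⟩

lemma my_coll3_of_dep (P Q R : Projectivization F (Fin 3 → F))
    (vP vQ vR : Fin 3 → F) (hvP : vP ≠ 0) (hvQ : vQ ≠ 0) (hvR : vR ≠ 0)
    (hP : P = Projectivization.mk F vP hvP) (hQ : Q = Projectivization.mk F vQ hvQ)
    (hR : R = Projectivization.mk F vR hvR)
    (c1 c2 c3 : F) (hc : c1 ≠ 0 ∨ c2 ≠ 0 ∨ c3 ≠ 0)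
    (hdep : c1 • vP + c2 • vQ + c3 • vR = 0) : Coll3 P Q R := by
  obtain ⟨a, ha⟩ := my_rep_scalar P vP hvP hP
  obtain ⟨b, hb⟩ := my_rep_scalar Q vQ hvQ hQ
  obtain ⟨d, hd⟩ := my_rep_scalar R vR hvR hR
  rw [Coll3, Fintype.not_linearIndependent_iff]
  refine ⟨![c1 * (a : F)⁻¹, c2 * (b : F)⁻¹, c3 * (d : F)⁻¹], ?_, ?_⟩
  · rw [Fin.sum_univ_three]
    simp only [Matrix.cons_val_zero, Matrix.cons_val_one, Matrix.head_cons,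
      Matrix.cons_val_two, Matrix.tail_cons]
    rw [ha, hb, hd, Units.smul_def, Units.smul_def, Units.smul_def, smul_smul, smul_smul,
      smul_smul, mul_assoc, mul_assoc, mul_assoc,
      inv_mul_cancel₀ a.ne_zero, inv_mul_cancel₀ b.ne_zero, inv_mul_cancel₀ d.ne_zero,
      mul_one, mul_one, mul_one]
    exact hdep
  · rcases hc with h | h | h
    · exact ⟨0, by simpa using mul_ne_zero h (inv_ne_zero a.ne_zero)⟩
    · exact ⟨1, by simpa using mul_ne_zero h (inv_ne_zero b.ne_zero)⟩
    · exact ⟨2, by simpa using mul_ne_zero h (inv_ne_zero d.ne_zero)⟩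

end MyAux

section MySq

variable {F : Type*} [Field F] [Fintype F]

lemma my_sq_mul_nonsq {x y : F} (hx : IsSquare x) (hx0 : x ≠ 0)
    (hy : ¬ IsSquare y) : ¬ IsSquare (x * y) := by
  classical
  have hχx : quadraticChar F x = 1 := (quadraticChar_one_iff_isSquare hx0).mpr hx
  have hχy : quadraticChar F y = -1 := quadraticChar_neg_one_iff_not_isSquare.mpr hy
  have : quadraticChar F (x * y) = -1 := by rw [map_mul, hχx, hχy]; ring
  exact quadraticChar_neg_one_iff_not_isSquare.mp this

lemma my_nonsq_mul_nonsq {x y : F} (hx : ¬ IsSquare x)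
    (hy : ¬ IsSquare y) : IsSquare (x * y) := by
  classical
  have hx0 : x ≠ 0 := fun h => hx (h ▸ ⟨0, by ring⟩)
  have hy0 : y ≠ 0 := fun h => hy (h ▸ ⟨0, by ring⟩)
  have hχx : quadraticChar F x = -1 := quadraticChar_neg_one_iff_not_isSquare.mpr hx
  have hχy : quadraticChar F y = -1 := quadraticChar_neg_one_iff_not_isSquare.mpr hy
  have : quadraticChar F (x * y) = 1 := by rw [map_mul, hχx, hχy]; ring
  exact (quadraticChar_one_iff_isSquare (mul_ne_zero hx0 hy0)).mp this

end MySq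

/-- with `R₀ = ⟨(a₀,b₀,0)⟩` as stated and `K = H ∪ {R₀}`, every point of
`C ∖ H` is `K`-covered. -/
theorem stmt5 (F : Type*) [Field F] [Fintype F] (q : ℕ) (hcard : Fintype.card F = q)
    (hodd : Odd q) (hq : 17 ≤ q) (a₀ b₀ : F) (ha₀ : a₀ ≠ 0) (hb₀ : b₀ ≠ 0)
    (h1 : q % 4 = 1 → ¬ IsSquare (a₀ * b₀))
    (h3 : q % 4 = 3 → a₀ * b₀ ≠ 0 ∧ IsSquare (a₀ * b₀)) :
    ∀ P ∈ conicC F \ HSet F,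
      PGCovered (HSet F ∪
        {Projectivization.mk F ![a₀, b₀, 0] (vec_ne_zero _ 0 (by simpa using ha₀))}) P := by
  classical
  intro P hP
  obtain ⟨hPC, hPH⟩ := hP
  have hw0 : P.rep ≠ 0 := P.rep_nonzero
  have hconic : P.rep 0 * P.rep 1 = P.rep 2 ^ 2 := hPC
  have hPrep : P = Projectivization.mk F P.rep P.rep_nonzero := (Projectivization.mk_rep P).symm
  set R₀ : Projectivization F (Fin 3 → F) :=
    Projectivization.mk F ![a₀, b₀, 0] (vec_ne_zero _ 0 (by simpa using ha₀)) with hR₀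
  by_cases h0 : P.rep 0 = 0
  · -- P is the point (0 : 1 : 0)
    have h2 : P.rep 2 = 0 := by
      have : P.rep 2 ^ 2 = 0 := by rw [← hconic, h0, zero_mul]
      exact pow_eq_zero_iff (by norm_num) |>.mp this
    have h1' : P.rep 1 ≠ 0 := by
      intro h
      apply hw0
      funext i
      fin_cases i <;> simp [h0, h, h2]
    have hPmk : P = Projectivization.mk F ![0, 1, 0] (vec_ne_zero _ 1 one_ne_zero) := by
      rw [hPrep, Projectivization.mk_eq_mk_iff]
      refine ⟨Units.mk0 (P.rep 1) h1', ?_⟩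
      funext i
      fin_cases i <;> simp [Units.smul_def, h0, h2]
    refine ⟨Projectivization.mk F ![1, (0:F) ^ 4, (0:F) ^ 2] (vec_ne_zero _ 0 (by simp)),
      Or.inl ⟨0, rfl⟩, R₀, Or.inr rfl, ?_, ?_⟩
    · intro h
      rw [hR₀, Projectivization.mk_eq_mk_iff] at h
      obtain ⟨a, ha⟩ := h
      have := congrFun ha 1
      simp [Units.smul_def] at this
      exact hb₀ this
    · refine my_coll3_of_dep P _ _ ![0, 1, 0] ![1, (0:F) ^ 4, (0:F) ^ 2] ![a₀, b₀, 0]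
        (vec_ne_zero _ 1 one_ne_zero) (vec_ne_zero _ 0 (by simp))
        (vec_ne_zero _ 0 (by simpa using ha₀)) hPmk rfl hR₀
        b₀ a₀ (-1) (Or.inr (Or.inr (by norm_num))) ?_
      funext i
      fin_cases i <;> simp <;> ring
  · -- P = (1 : t² : t) with t a nonsquare
    set t : F := P.rep 2 / P.rep 0 with ht
    have hw2 : P.rep 2 = t * P.rep 0 := by rw [ht, div_mul_cancel₀ _ h0]
    have hw1 : P.rep 1 = t ^ 2 * P.rep 0 := by
      apply mul_left_cancel₀ h0
      rw [hconic, hw2]; ring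
    have hPmk : P = Projectivization.mk F ![1, t ^ 2, t] (vec_ne_zero _ 0 (by simp)) := by
      rw [hPrep, Projectivization.mk_eq_mk_iff]
      refine ⟨Units.mk0 (P.rep 0) h0, ?_⟩
      funext i
      fin_cases i
      · simp [Units.smul_def]
      · simp [Units.smul_def]
        rw [hw1]; ring
      · simp [Units.smul_def]
        rw [hw2]; ring
    have ht_ns : ¬ IsSquare t := by
      rintro ⟨s, hs⟩
      apply hPH
      refine ⟨s, ?_⟩
      rw [hPmk, Projectivization.mk_eq_mk_iff]
      exact ⟨1, by funext i; fin_cases i <;> simp [hs] <;> ring⟩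
    have ht0 : t ≠ 0 := fun h => ht_ns (h ▸ ⟨0, by ring⟩)
    have hq2 : q % 2 = 1 := Nat.odd_iff.mp hodd
    have hmod : q % 4 = 1 ∨ q % 4 = 3 := by omega
    have hns : ¬ IsSquare (-(a₀ * b₀)) := by
      rcases hmod with hm | hm
      · have hneg1 : IsSquare (-1 : F) := by
          rw [FiniteField.isSquare_neg_one_iff, hcard, hm]; norm_num
        have := my_sq_mul_nonsq hneg1 (by norm_num) (h1 hm)
        simpa using this
      · have hneg1 : ¬ IsSquare (-1 : F) := by
          rw [FiniteField.isSquare_neg_one_iff, hcard, hm]; norm_num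
        obtain ⟨hab0, habsq⟩ := h3 hm
        have := my_sq_mul_nonsq habsq hab0 hneg1
        simpa [mul_comm] using this
    have husq : IsSquare (-b₀ / (a₀ * t)) := by
      have hsq : IsSquare ((-(a₀ * b₀)) * t) := my_nonsq_mul_nonsq hns ht_ns
      obtain ⟨r, hr⟩ := hsq
      refine ⟨r * (a₀ * t)⁻¹, ?_⟩
      have key : -b₀ / (a₀ * t) = ((-(a₀ * b₀)) * t) * ((a₀ * t)⁻¹ * (a₀ * t)⁻¹) := by
        field_simp
      rw [key, hr]; ring
    obtain ⟨s, hs⟩ := husq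
    have hs2 : s ^ 2 = -b₀ / (a₀ * t) := by rw [hs]; ring
    have hs0 : s ≠ 0 := by
      intro h
      rw [h, zero_pow (by norm_num)] at hs2
      rcases div_eq_zero_iff.mp hs2.symm with h' | h'
      · exact hb₀ (neg_eq_zero.mp h')
      · exact (mul_ne_zero ha₀ ht0) h'
    have hkey : a₀ * t * s ^ 2 = -b₀ := by
      rw [hs2]
      field_simp
    refine ⟨Projectivization.mk F ![1, s ^ 4, s ^ 2] (vec_ne_zero _ 0 (by simp)),
      Or.inl ⟨s, rfl⟩, R₀, Or.inr rfl, ?_, ?_⟩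
    · intro h
      rw [hR₀, Projectivization.mk_eq_mk_iff] at h
      obtain ⟨a, ha⟩ := h
      have := congrFun ha 2
      simp [Units.smul_def] at this
      exact hs0 (pow_eq_zero_iff (by norm_num) |>.mp this.symm)
    · refine my_coll3_of_dep P _ _ ![1, t ^ 2, t] ![1, s ^ 4, s ^ 2] ![a₀, b₀, 0]
        (vec_ne_zero _ 0 (by simp)) (vec_ne_zero _ 0 (by simp))
        (vec_ne_zero _ 0 (by simpa using ha₀)) hPmk rfl hR₀
        (a₀ * s ^ 2) (-(a₀ * t)) (t - s ^ 2)
        (Or.inl (mul_ne_zero ha₀ (pow_ne_zero 2 hs0))) ?_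
      funext i
      fin_cases i
      · simp; ring
      · simp
        linear_combination (t - s ^ 2) * hkey
      · simp; ring
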